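/- Under the coordinate change ξ = 2μ₂/(1 + \bar{μ}₁μ₂), η = (1 − μ₁\bar{μ}₂)/(2\bar{μ}₂) (with μ₂ ≠ 0 and 1 + \bar{μ}₁μ₂ ≠ 0), the equation \bar{z}₀μ₁μ₂ + (t₀² + z₀\bar{z}₀)μ₂ − μ₁ − z₀ = 0 is equivalent to ξ(\bar{z}₀ − \bar{η}) − \bar{ξ}(z₀ − η) + |ξ|²(t₀² + |z₀ − η|² − 1/|ξ|²) = 0. -/

import Mathlib

open ComplexConjugate

/-- Under the coordinate change `ξ = 2μ₂/(1 + conj μ₁ · μ₂)`,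
`η = (1 − μ₁ conj μ₂)/(2 conj μ₂)` (with `μ₂ ≠ 0`, `1 + conj μ₁ · μ₂ ≠ 0`), the equation
`conj z₀ μ₁ μ₂ + (t₀² + z₀ conj z₀) μ₂ − μ₁ − z₀ = 0` is equivalent to
`ξ(conj z₀ − conj η) − conj ξ (z₀ − η) + |ξ|²(t₀² + |z₀ − η|² − 1/|ξ|²) = 0`. -/
theorem sphere_eq_coordinate_change (μ₁ μ₂ z₀ : ℂ) (t₀ : ℝ)
    (hμ₂ : μ₂ ≠ 0) (hden : 1 + conj μ₁ * μ₂ ≠ 0)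
    (ξ η : ℂ)
    (hξ : ξ = 2 * μ₂ / (1 + conj μ₁ * μ₂))
    (hη : η = (1 - μ₁ * conj μ₂) / (2 * conj μ₂)) :
    (conj z₀ * μ₁ * μ₂ + ((t₀ : ℂ)^2 + z₀ * conj z₀) * μ₂ - μ₁ - z₀ = 0)
    ↔ (ξ * (conj z₀ - conj η) - conj ξ * (z₀ - η)
        + (‖ξ‖ : ℂ)^2 * ((t₀ : ℂ)^2 + (‖z₀ - η‖ : ℂ)^2
            - 1 / (‖ξ‖ : ℂ)^2) = 0) := by
  have hμ₂' : (conj μ₂ : ℂ) ≠ 0 := by simpa using hμ₂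
  have hden' : (1 : ℂ) + μ₁ * conj μ₂ ≠ 0 := by
    intro h
    apply hden
    have := congrArg conj h
    simpa [mul_comm] using this
  have hξ0 : ξ ≠ 0 := by
    rw [hξ]
    exact div_ne_zero (mul_ne_zero two_ne_zero hμ₂) hden
  have hξ0' : conj ξ ≠ 0 := by simpa using hξ0
  have hxx : ξ * conj ξ ≠ 0 := mul_ne_zero hξ0 hξ0'
  have h1 : ((‖ξ‖ : ℂ))^2 = ξ * conj ξ := by
    rw [Complex.mul_conj]; norm_cast; exact Complex.sq_norm ξ
  have h2 : ((‖z₀ - η‖ : ℂ))^2 = (z₀ - η) * conj (z₀ - η) := by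
    rw [Complex.mul_conj]; norm_cast; exact Complex.sq_norm _
  rw [h1, h2]
  have hsplit : ξ * conj ξ * ((t₀ : ℂ)^2 + (z₀ - η) * conj (z₀ - η) - 1 / (ξ * conj ξ))
      = ξ * conj ξ * ((t₀ : ℂ)^2 + (z₀ - η) * conj (z₀ - η)) - 1 := by
    field_simp
  rw [hsplit]
  have hξc : conj ξ = 2 * conj μ₂ / (1 + μ₁ * conj μ₂) := by
    rw [hξ]; simp [map_div₀, map_ofNat, mul_comm]
  have hηc : conj η = (1 - conj μ₁ * μ₂) / (2 * μ₂) := by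
    rw [hη]; simp [map_div₀, map_ofNat, mul_comm]
  have eA : ξ * (conj z₀ - conj η)
      = (2 * μ₂ * conj z₀ - 1 + conj μ₁ * μ₂) / (1 + conj μ₁ * μ₂) := by
    rw [hξ, hηc]; field_simp; ring
  have eB : conj ξ * (z₀ - η)
      = (2 * conj μ₂ * z₀ - 1 + μ₁ * conj μ₂) / (1 + μ₁ * conj μ₂) := by
    rw [hξc, hη]; field_simp; ring
  have eC : ξ * conj ξ * ((t₀ : ℂ)^2 + (z₀ - η) * conj (z₀ - η))
      = (4 * μ₂ * conj μ₂ * (t₀ : ℂ)^2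
          + (2 * conj μ₂ * z₀ - 1 + μ₁ * conj μ₂) * (2 * μ₂ * conj z₀ - 1 + conj μ₁ * μ₂))
        / ((1 + conj μ₁ * μ₂) * (1 + μ₁ * conj μ₂)) := by
    rw [map_sub, hξc, hηc, hξ, hη]; field_simp; ring
  have key : (1 + conj μ₁ * μ₂) * (1 + μ₁ * conj μ₂)
      * (ξ * (conj z₀ - conj η) - conj ξ * (z₀ - η)
        + (ξ * conj ξ * ((t₀ : ℂ)^2 + (z₀ - η) * conj (z₀ - η)) - 1))
      = 4 * conj μ₂
        * (conj z₀ * μ₁ * μ₂ + ((t₀ : ℂ)^2 + z₀ * conj z₀) * μ₂ - μ₁ - z₀) := by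
    rw [eA, eB, eC]
    field_simp
    ring
  constructor
  · intro h
    have h0 : (1 + conj μ₁ * μ₂) * (1 + μ₁ * conj μ₂)
        * (ξ * (conj z₀ - conj η) - conj ξ * (z₀ - η)
          + (ξ * conj ξ * ((t₀ : ℂ)^2 + (z₀ - η) * conj (z₀ - η)) - 1)) = 0 := by
      rw [key, h, mul_zero]
    rcases mul_eq_zero.mp h0 with h0 | h0
    · rcases mul_eq_zero.mp h0 with h' | h'
      · exact absurd h' hden
      · exact absurd h' hden'
    · exact h0
  · intro h
    have h0 : 4 * conj μ₂
        * (conj z₀ * μ₁ * μ₂ + ((t₀ : ℂ)^2 + z₀ * conj z₀) * μ₂ - μ₁ - z₀) = 0 := by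
      rw [← key, h, mul_zero]
    rcases mul_eq_zero.mp h0 with h0 | h0
    · exact absurd h0 (mul_ne_zero (by norm_num) hμ₂')
    · exact h0
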